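/- Fix Δ ∈ ℕ, β ≥ 0 and p ∈ (0,1). (a) There exists h⁺ ∈ ℝ such that for every h ≥ h⁺ and every finite graph G = (V,E) of maximum degree at most Δ, π_p ≼ μ^{β,h}. (b) There exists h⁻ ∈ ℝ such that for every h ≤ h⁻ and every finite graph G = (V,E) of maximum degree at most Δ, μ^{β,h} ≼ π_p. Here μ^{β,h} is the Ising measure on G with constant external field h and π_p is the product measure on {-1,+1}^V under which each site independently takes the value +1 with probability p. -/

import Mathlib

/-!
Ising model on a finite graph. Spin configurations are `σ : V → Bool`, with `true`
standing for spin `+1` and `false` for spin `-1`; `spin` is the corresponding `±1` value.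
Probability measures on the finite configuration space are represented by weight functions.
-/

open Finset

/-- The `±1` value of a spin. -/
def spin (b : Bool) : ℝ := if b then 1 else -1

/-- The conditional probability `μ(σ(s) = +1 | σ ≡ ξ off s)`. -/
noncomputable def condOne {V : Type*} [DecidableEq V] [Fintype V]
    (μ : (V → Bool) → ℝ) (s : V) (ξ : V → Bool) : ℝ :=
  μ (Function.update ξ s true) /
    (μ (Function.update ξ s true) + μ (Function.update ξ s false))

/-- The interaction energy `σ(t)σ(t')` of an (unordered) edge. -/
def edgeTerm {V : Type*} (σ : V → Bool) : Sym2 V → ℝ :=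
  Sym2.lift ⟨fun a b => spin (σ a) * spin (σ b), fun a b => by ring⟩

/-- The Ising Hamiltonian `H(σ) = -β ∑_{{t,t'} ∈ E} σ(t)σ(t') - ∑_t h(t) σ(t)`. -/
noncomputable def isingH {V : Type*} [DecidableEq V] [Fintype V]
    (G : SimpleGraph V) [DecidableRel G.Adj] (β : ℝ) (h : V → ℝ) (σ : V → Bool) : ℝ :=
  -β * ∑ e ∈ G.edgeFinset, edgeTerm σ e - ∑ t : V, h t * spin (σ t)

/-- The Ising measure `μ^{β,h}(σ) = e^{-H(σ)}/Z` on `{-1,+1}^V`. -/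
noncomputable def isingWeight {V : Type*} [DecidableEq V] [Fintype V]
    (G : SimpleGraph V) [DecidableRel G.Adj] (β : ℝ) (h : V → ℝ) (σ : V → Bool) : ℝ :=
  Real.exp (-isingH G β h σ) / ∑ τ : V → Bool, Real.exp (-isingH G β h τ)

/-- Stochastic domination `μ ≼ ν` for weight functions: `∑ f dμ ≤ ∑ f dν` for every
nondecreasing `f` (coordinatewise order, with `false < true`, i.e. `-1 < +1`). -/
def Dominates {V : Type*} [DecidableEq V] [Fintype V] (μ ν : (V → Bool) → ℝ) : Prop :=
  ∀ f : (V → Bool) → ℝ, Monotone f →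
    ∑ σ : V → Bool, μ σ * f σ ≤ ∑ σ : V → Bool, ν σ * f σ

/-- The product measure `π_p` on `{-1,+1}^V`: each site is `+1` (i.e. `true`) with
probability `p`, independently. -/
noncomputable def prodWeight {V : Type*} [Fintype V] (p : ℝ) : (V → Bool) → ℝ := fun σ =>
  ∏ v : V, if σ v then p else 1 - p

section Aux

variable {V : Type*} [DecidableEq V] [Fintype V]

/-- One-site smoothing operator. -/
noncomputable def Tsm (p : ℝ) (s : V) (f : (V → Bool) → ℝ) : (V → Bool) → ℝ :=
  fun ξ => p * f (Function.update ξ s true) + (1 - p) * f (Function.update ξ s false)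

lemma flip_invol (s : V) :
    Function.Involutive (fun σ : V → Bool => Function.update σ s (!σ s)) := by
  intro σ; funext v
  by_cases hv : v = s
  · subst hv; simp
  · simp [Function.update_of_ne hv]

lemma sum_split (s : V) (F : (V → Bool) → ℝ) :
    2 * ∑ σ : V → Bool, F σ =
      ∑ σ : V → Bool, (F (Function.update σ s true) + F (Function.update σ s false)) := by
  have h2 : ∑ σ : V → Bool, F (Function.update σ s (!σ s)) = ∑ σ : V → Bool, F σ :=
    Fintype.sum_bijective _ (flip_invol s).bijective _ _ (fun σ => rfl)
  have key : ∀ σ : V → Bool,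
      F (Function.update σ s true) + F (Function.update σ s false)
        = F σ + F (Function.update σ s (!σ s)) := by
    intro σ
    cases h : σ s with
    | true =>
        have h1 : Function.update σ s true = σ := by
          funext v; by_cases hv : v = s
          · subst hv; simp [h]
          · simp [Function.update_of_ne hv]
        rw [h1]
        simp only [Bool.not_true]
    | false =>
        have h1 : Function.update σ s false = σ := by
          funext v; by_cases hv : v = s
          · subst hv; simp [h]
          · simp [Function.update_of_ne hv]
        rw [h1]
        simp only [Bool.not_false]
        exact add_comm _ _
  calc 2 * ∑ σ : V → Bool, F σ
      = ∑ σ : V → Bool, F σ + ∑ σ : V → Bool, F (Function.update σ s (!σ s)) := by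
        rw [h2]; ring
    _ = ∑ σ : V → Bool, (F σ + F (Function.update σ s (!σ s))) := by
        rw [Finset.sum_add_distrib]
    _ = ∑ σ : V → Bool, (F (Function.update σ s true) + F (Function.update σ s false)) := by
        exact Finset.sum_congr rfl (fun σ _ => (key σ).symm)

lemma sum_mul_Tsm_sub (p : ℝ) (ν f : (V → Bool) → ℝ) (s : V) :
    2 * (∑ σ : V → Bool, ν σ * Tsm p s f σ) - 2 * (∑ σ : V → Bool, ν σ * f σ)
      = ∑ σ : V → Bool,
          (f (Function.update σ s true) - f (Function.update σ s false)) *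
          (p * (ν (Function.update σ s true) + ν (Function.update σ s false))
            - ν (Function.update σ s true)) := by
  rw [sum_split s (fun σ => ν σ * Tsm p s f σ), sum_split s (fun σ => ν σ * f σ),
    ← Finset.sum_sub_distrib]
  refine Finset.sum_congr rfl (fun σ _ => ?_)
  simp only [Tsm, Function.update_idem]
  ring

lemma update_false_le_update_true (σ : V → Bool) (s : V) :
    Function.update σ s false ≤ Function.update σ s true := by
  intro v
  by_cases hv : v = s
  · subst hv; simp
  · simp [Function.update_of_ne hv]

lemma sum_Tsm_le (p : ℝ) (ν f : (V → Bool) → ℝ) (s : V) (hf : Monotone f)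
    (hplow : ∀ ξ : V → Bool,
      p * (ν (Function.update ξ s true) + ν (Function.update ξ s false))
        ≤ ν (Function.update ξ s true)) :
    ∑ σ : V → Bool, ν σ * Tsm p s f σ ≤ ∑ σ : V → Bool, ν σ * f σ := by
  have h := sum_mul_Tsm_sub p ν f s
  have hterm : ∑ σ : V → Bool,
      (f (Function.update σ s true) - f (Function.update σ s false)) *
      (p * (ν (Function.update σ s true) + ν (Function.update σ s false))
        - ν (Function.update σ s true)) ≤ 0 := by
    refine Finset.sum_nonpos (fun σ _ => ?_)
    apply mul_nonpos_of_nonneg_of_nonpos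
    · have := hf (update_false_le_update_true σ s); linarith
    · linarith [hplow σ]
  linarith

lemma sum_Tsm_ge (p : ℝ) (ν f : (V → Bool) → ℝ) (s : V) (hf : Monotone f)
    (hphigh : ∀ ξ : V → Bool,
      ν (Function.update ξ s true)
        ≤ p * (ν (Function.update ξ s true) + ν (Function.update ξ s false))) :
    ∑ σ : V → Bool, ν σ * f σ ≤ ∑ σ : V → Bool, ν σ * Tsm p s f σ := by
  have h := sum_mul_Tsm_sub p ν f s
  have hterm : (0:ℝ) ≤ ∑ σ : V → Bool,
      (f (Function.update σ s true) - f (Function.update σ s false)) *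
      (p * (ν (Function.update σ s true) + ν (Function.update σ s false))
        - ν (Function.update σ s true)) := by
    refine Finset.sum_nonneg (fun σ _ => ?_)
    apply mul_nonneg
    · have := hf (update_false_le_update_true σ s); linarith
    · linarith [hphigh σ]
  linarith

lemma sum_Tsm_eq (p : ℝ) (ν f : (V → Bool) → ℝ) (s : V)
    (heq : ∀ ξ : V → Bool,
      p * (ν (Function.update ξ s true) + ν (Function.update ξ s false))
        = ν (Function.update ξ s true)) :
    ∑ σ : V → Bool, ν σ * Tsm p s f σ = ∑ σ : V → Bool, ν σ * f σ := by
  have h := sum_mul_Tsm_sub p ν f s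
  have hterm : ∑ σ : V → Bool,
      (f (Function.update σ s true) - f (Function.update σ s false)) *
      (p * (ν (Function.update σ s true) + ν (Function.update σ s false))
        - ν (Function.update σ s true)) = 0 := by
    refine Finset.sum_eq_zero (fun σ _ => ?_)
    rw [heq σ]; ring
  rw [hterm] at h
  linarith

lemma update_mono {ξ η : V → Bool} (hle : ξ ≤ η) (s : V) (b : Bool) :
    Function.update ξ s b ≤ Function.update η s b := by
  intro v
  by_cases hv : v = s
  · subst hv; simp
  · simpa [Function.update_of_ne hv] using hle v

lemma monotone_Tsm {p : ℝ} (hp0 : 0 ≤ p) (hp1 : p ≤ 1) (s : V) {f : (V → Bool) → ℝ}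
    (hf : Monotone f) : Monotone (Tsm p s f) := by
  intro ξ η hle
  unfold Tsm
  have h1 : f (Function.update ξ s true) ≤ f (Function.update η s true) :=
    hf (update_mono hle s true)
  have h2 : f (Function.update ξ s false) ≤ f (Function.update η s false) :=
    hf (update_mono hle s false)
  have := mul_le_mul_of_nonneg_left h1 hp0
  have := mul_le_mul_of_nonneg_left h2 (by linarith : (0:ℝ) ≤ 1 - p)
  linarith

/-- `f` does not depend on coordinate `s`. -/
def Insens (f : (V → Bool) → ℝ) (s : V) : Prop :=
  ∀ (ξ : V → Bool) (b : Bool), f (Function.update ξ s b) = f ξ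

lemma insens_Tsm_self (p : ℝ) (s : V) (f : (V → Bool) → ℝ) : Insens (Tsm p s f) s := by
  intro ξ b
  simp [Tsm, Function.update_idem]

lemma insens_Tsm (p : ℝ) {f : (V → Bool) → ℝ} {s : V} (hf : Insens f s) (t : V) :
    Insens (Tsm p t f) s := by
  intro ξ b
  by_cases hts : t = s
  · subst hts; exact insens_Tsm_self p t f ξ b
  · simp only [Tsm]
    rw [Function.update_comm (fun h => hts h.symm) b true ξ,
      Function.update_comm (fun h => hts h.symm) b false ξ, hf _ b, hf _ b]

/-- Iterated smoothing along a list of sites. -/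
noncomputable def TL (p : ℝ) (l : List V) (f : (V → Bool) → ℝ) : (V → Bool) → ℝ :=
  l.foldr (fun s g => Tsm p s g) f

@[simp] lemma TL_nil (p : ℝ) (f : (V → Bool) → ℝ) : TL p [] f = f := rfl

@[simp] lemma TL_cons (p : ℝ) (s : V) (l : List V) (f : (V → Bool) → ℝ) :
    TL p (s :: l) f = Tsm p s (TL p l f) := rfl

lemma monotone_TL {p : ℝ} (hp0 : 0 ≤ p) (hp1 : p ≤ 1) (l : List V) {f : (V → Bool) → ℝ}
    (hf : Monotone f) : Monotone (TL p l f) := by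
  induction l with
  | nil => exact hf
  | cons s l ih => exact monotone_Tsm hp0 hp1 s ih

lemma insens_TL (p : ℝ) (l : List V) (f : (V → Bool) → ℝ) {s : V} (hs : s ∈ l) :
    Insens (TL p l f) s := by
  induction l with
  | nil => cases hs
  | cons t l ih =>
      rcases List.mem_cons.mp hs with h | h
      · subst h; exact insens_Tsm_self p s (TL p l f)
      · exact insens_Tsm p (ih h) t

lemma const_of_insens {g : (V → Bool) → ℝ} (hg : ∀ s : V, Insens g s) (ξ η : V → Bool) :
    g ξ = g η := by
  have main : ∀ A : Finset V, ∀ ξ η : V → Bool, (∀ v ∉ A, ξ v = η v) → g ξ = g η := by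
    intro A
    induction A using Finset.induction_on with
    | empty =>
        intro ξ η hoff
        have : ξ = η := funext (fun v => hoff v (Finset.notMem_empty v))
        rw [this]
    | insert a A ha ih =>
        intro ξ η hoff
        have h1 : g ξ = g (Function.update ξ a (η a)) := (hg a ξ (η a)).symm
        rw [h1]
        apply ih
        intro v hv
        by_cases hva : v = a
        · subst hva; simp
        · rw [Function.update_of_ne hva]
          exact hoff v (by simp [hva, hv])
  exact main Finset.univ ξ η (fun v hv => absurd (Finset.mem_univ v) hv)

lemma sum_TL_le (p : ℝ) (hp0 : 0 ≤ p) (hp1 : p ≤ 1) (ν : (V → Bool) → ℝ) (l : List V)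
    {f : (V → Bool) → ℝ} (hf : Monotone f)
    (hplow : ∀ (s : V) (ξ : V → Bool),
      p * (ν (Function.update ξ s true) + ν (Function.update ξ s false))
        ≤ ν (Function.update ξ s true)) :
    ∑ σ : V → Bool, ν σ * TL p l f σ ≤ ∑ σ : V → Bool, ν σ * f σ := by
  induction l with
  | nil => simp
  | cons s l ih =>
      calc ∑ σ : V → Bool, ν σ * TL p (s :: l) f σ
          ≤ ∑ σ : V → Bool, ν σ * TL p l f σ :=
            sum_Tsm_le p ν (TL p l f) s (monotone_TL hp0 hp1 l hf) (hplow s)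
        _ ≤ _ := ih

lemma sum_TL_ge (p : ℝ) (hp0 : 0 ≤ p) (hp1 : p ≤ 1) (ν : (V → Bool) → ℝ) (l : List V)
    {f : (V → Bool) → ℝ} (hf : Monotone f)
    (hphigh : ∀ (s : V) (ξ : V → Bool),
      ν (Function.update ξ s true)
        ≤ p * (ν (Function.update ξ s true) + ν (Function.update ξ s false))) :
    ∑ σ : V → Bool, ν σ * f σ ≤ ∑ σ : V → Bool, ν σ * TL p l f σ := by
  induction l with
  | nil => simp
  | cons s l ih =>
      calc ∑ σ : V → Bool, ν σ * f σ
          ≤ ∑ σ : V → Bool, ν σ * TL p l f σ := ih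
        _ ≤ ∑ σ : V → Bool, ν σ * TL p (s :: l) f σ :=
            sum_Tsm_ge p ν (TL p l f) s (monotone_TL hp0 hp1 l hf) (hphigh s)

lemma sum_TL_eq (p : ℝ) (ν : (V → Bool) → ℝ) (l : List V) (f : (V → Bool) → ℝ)
    (heq : ∀ (s : V) (ξ : V → Bool),
      p * (ν (Function.update ξ s true) + ν (Function.update ξ s false))
        = ν (Function.update ξ s true)) :
    ∑ σ : V → Bool, ν σ * TL p l f σ = ∑ σ : V → Bool, ν σ * f σ := by
  induction l with
  | nil => simp
  | cons s l ih => rw [TL_cons, sum_Tsm_eq p ν (TL p l f) s (heq s), ih]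

/-! ### Product measure facts -/

lemma prodWeight_update (p : ℝ) (ξ : V → Bool) (s : V) (b : Bool) :
    prodWeight p (Function.update ξ s b)
      = (if b then p else 1 - p) * ∏ v ∈ Finset.univ.erase s, (if ξ v then p else 1 - p) := by
  unfold prodWeight
  have hfun : ∀ v : V, (if Function.update ξ s b v then p else 1 - p)
      = Function.update (fun v => if ξ v then p else 1 - p) s (if b then p else 1 - p) v := by
    intro v
    by_cases hv : v = s
    · subst hv; simp
    · simp [Function.update_of_ne hv]
  calc ∏ v : V, (if Function.update ξ s b v then p else 1 - p)
      = ∏ v : V, Function.update (fun v => if ξ v then p else 1 - p) s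
          (if b then p else 1 - p) v :=
        Finset.prod_congr rfl (fun v _ => hfun v)
    _ = _ := by
        rw [Finset.prod_update_of_mem (Finset.mem_univ s), Finset.sdiff_singleton_eq_erase]

lemma prodWeight_ratio (p : ℝ) (s : V) (ξ : V → Bool) :
    p * (prodWeight p (Function.update ξ s true) + prodWeight p (Function.update ξ s false))
      = prodWeight p (Function.update ξ s true) := by
  rw [prodWeight_update, prodWeight_update]
  have ht : (if (true : Bool) then p else 1 - p) = p := rfl
  have hf : (if (false : Bool) then p else 1 - p) = 1 - p := rfl
  rw [ht, hf]
  ring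

lemma sum_prodWeight (p : ℝ) : ∑ σ : V → Bool, prodWeight p σ = 1 := by
  have h := Finset.prod_univ_sum (fun _ : V => (univ : Finset Bool))
      (fun _ b => if b = true then p else 1 - p)
  rw [Fintype.piFinset_univ] at h
  unfold prodWeight
  rw [← h]
  have h1 : ∀ v : V, v ∈ (univ : Finset V) →
      (∑ b ∈ (univ : Finset Bool), if b = true then p else 1 - p) = 1 := by
    intro v _
    rw [Fintype.sum_bool]
    norm_num
  rw [Finset.prod_congr rfl h1, Finset.prod_const_one]

/-! ### Ising measure facts -/

lemma spin_bounds (b : Bool) : -1 ≤ spin b ∧ spin b ≤ 1 := by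
  cases b <;> norm_num [spin]

lemma edgeTerm_bounds (σ : V → Bool) (e : Sym2 V) :
    -1 ≤ edgeTerm σ e ∧ edgeTerm σ e ≤ 1 := by
  induction e using Sym2.ind with
  | _ a c =>
    simp only [edgeTerm, Sym2.lift_mk]
    cases σ a <;> cases σ c <;> norm_num [spin]

lemma edgeTerm_update_not_mem {s : V} {e : Sym2 V} (hs : s ∉ e) (ξ : V → Bool) (b : Bool) :
    edgeTerm (Function.update ξ s b) e = edgeTerm ξ e := by
  induction e using Sym2.ind with
  | _ a c =>
    rw [Sym2.mem_iff] at hs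
    push_neg at hs
    simp only [edgeTerm, Sym2.lift_mk]
    rw [Function.update_of_ne (fun h => hs.1 h.symm), Function.update_of_ne (fun h => hs.2 h.symm)]

variable (G : SimpleGraph V) [DecidableRel G.Adj]

lemma edge_sum_diff_bounds (s : V) (ξ : V → Bool) :
    -2 * (G.degree s : ℝ) ≤
      ∑ e ∈ G.edgeFinset,
        (edgeTerm (Function.update ξ s true) e - edgeTerm (Function.update ξ s false) e) ∧
      ∑ e ∈ G.edgeFinset,
        (edgeTerm (Function.update ξ s true) e - edgeTerm (Function.update ξ s false) e)
        ≤ 2 * (G.degree s : ℝ) := by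
  have hcard : ({e ∈ G.edgeFinset | s ∈ e} : Finset (Sym2 V)).card = G.degree s := by
    rw [← SimpleGraph.incidenceFinset_eq_filter, SimpleGraph.card_incidenceFinset_eq_degree]
  constructor
  · calc -2 * (G.degree s : ℝ)
        = ∑ e ∈ G.edgeFinset, (if s ∈ e then (-2 : ℝ) else 0) := by
          rw [Finset.sum_ite, Finset.sum_const, Finset.sum_const_zero, add_zero, hcard]
          push_cast; ring
      _ ≤ _ := by
          refine Finset.sum_le_sum (fun e _ => ?_)
          by_cases he : s ∈ e
          · simp only [he, if_true]
            have h1 := edgeTerm_bounds (Function.update ξ s true) e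
            have h2 := edgeTerm_bounds (Function.update ξ s false) e
            linarith [h1.1, h2.2]
          · simp only [he, if_false]
            rw [edgeTerm_update_not_mem he, edgeTerm_update_not_mem he, sub_self]
  · calc ∑ e ∈ G.edgeFinset,
        (edgeTerm (Function.update ξ s true) e - edgeTerm (Function.update ξ s false) e)
        ≤ ∑ e ∈ G.edgeFinset, (if s ∈ e then (2 : ℝ) else 0) := by
          refine Finset.sum_le_sum (fun e _ => ?_)
          by_cases he : s ∈ e
          · simp only [he, if_true]
            have h1 := edgeTerm_bounds (Function.update ξ s true) e
            have h2 := edgeTerm_bounds (Function.update ξ s false) e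
            linarith [h1.2, h2.1]
          · simp only [he, if_false]
            rw [edgeTerm_update_not_mem he, edgeTerm_update_not_mem he, sub_self]
      _ = 2 * (G.degree s : ℝ) := by
          rw [Finset.sum_ite, Finset.sum_const, Finset.sum_const_zero, add_zero, hcard]
          push_cast; ring

lemma neg_isingH_sub (β h : ℝ) (s : V) (ξ : V → Bool) :
    (-isingH G β (fun _ => h) (Function.update ξ s true))
      - (-isingH G β (fun _ => h) (Function.update ξ s false))
    = β * ∑ e ∈ G.edgeFinset,
        (edgeTerm (Function.update ξ s true) e - edgeTerm (Function.update ξ s false) e)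
      + 2 * h := by
  have hfield : ∑ t : V, h * spin (Function.update ξ s true t)
      - ∑ t : V, h * spin (Function.update ξ s false t) = 2 * h := by
    rw [← Finset.sum_sub_distrib]
    rw [Fintype.sum_eq_single s]
    · simp [spin]; ring
    · intro t ht
      rw [Function.update_of_ne ht, Function.update_of_ne ht, sub_self]
  have hedge : ∑ e ∈ G.edgeFinset, edgeTerm (Function.update ξ s true) e
      - ∑ e ∈ G.edgeFinset, edgeTerm (Function.update ξ s false) e
      = ∑ e ∈ G.edgeFinset,
        (edgeTerm (Function.update ξ s true) e - edgeTerm (Function.update ξ s false) e) :=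
    (Finset.sum_sub_distrib _ _).symm
  unfold isingH
  linear_combination β * hedge + hfield

lemma ising_Z_pos (β : ℝ) (h : V → ℝ) :
    0 < ∑ τ : V → Bool, Real.exp (-isingH G β h τ) := by
  have : Nonempty (V → Bool) := ⟨fun _ => false⟩
  exact Finset.sum_pos (fun τ _ => Real.exp_pos _) Finset.univ_nonempty

lemma sum_isingWeight (β : ℝ) (h : V → ℝ) :
    ∑ σ : V → Bool, isingWeight G β h σ = 1 := by
  unfold isingWeight
  rw [← Finset.sum_div]
  exact div_self (ne_of_gt (ising_Z_pos G β h))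

lemma ising_plow {p β h : ℝ} {Δ : ℕ} (hβ : 0 ≤ β) (hp : p ∈ Set.Ioo (0:ℝ) 1)
    (hdeg : ∀ v : V, G.degree v ≤ Δ)
    (hh : Real.log p - Real.log (1 - p) ≤ 2 * h - 2 * β * Δ) (s : V) (ξ : V → Bool) :
    p * (isingWeight G β (fun _ => h) (Function.update ξ s true)
        + isingWeight G β (fun _ => h) (Function.update ξ s false))
      ≤ isingWeight G β (fun _ => h) (Function.update ξ s true) := by
  set A := -isingH G β (fun _ => h) (Function.update ξ s true) with hA
  set B := -isingH G β (fun _ => h) (Function.update ξ s false) with hB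
  have hZ := ising_Z_pos G β (fun _ => h)
  have hE := edge_sum_diff_bounds G s ξ
  have hds : (G.degree s : ℝ) ≤ (Δ : ℝ) := by exact_mod_cast hdeg s
  have hAB : Real.log p - Real.log (1 - p) ≤ A - B := by
    have hsub := neg_isingH_sub G β h s ξ
    have h1 : β * ∑ e ∈ G.edgeFinset,
        (edgeTerm (Function.update ξ s true) e - edgeTerm (Function.update ξ s false) e)
        ≥ β * (-2 * (G.degree s : ℝ)) := mul_le_mul_of_nonneg_left hE.1 hβ
    nlinarith [hE.1]
  have hkey : p * Real.exp B ≤ (1 - p) * Real.exp A := by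
    have hle : Real.log p + B ≤ Real.log (1 - p) + A := by linarith
    have := Real.exp_le_exp.mpr hle
    rwa [Real.exp_add, Real.exp_add, Real.exp_log hp.1,
      Real.exp_log (by linarith [hp.2] : (0:ℝ) < 1 - p)] at this
  show p * (Real.exp A / _ + Real.exp B / _) ≤ Real.exp A / _
  rw [← add_div, ← mul_div_assoc]
  rw [div_le_div_iff_of_pos_right hZ]
  linarith

lemma ising_phigh {p β h : ℝ} {Δ : ℕ} (hβ : 0 ≤ β) (hp : p ∈ Set.Ioo (0:ℝ) 1)
    (hdeg : ∀ v : V, G.degree v ≤ Δ)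
    (hh : 2 * h + 2 * β * Δ ≤ Real.log p - Real.log (1 - p)) (s : V) (ξ : V → Bool) :
    isingWeight G β (fun _ => h) (Function.update ξ s true)
      ≤ p * (isingWeight G β (fun _ => h) (Function.update ξ s true)
        + isingWeight G β (fun _ => h) (Function.update ξ s false)) := by
  set A := -isingH G β (fun _ => h) (Function.update ξ s true) with hA
  set B := -isingH G β (fun _ => h) (Function.update ξ s false) with hB
  have hZ := ising_Z_pos G β (fun _ => h)
  have hE := edge_sum_diff_bounds G s ξ
  have hds : (G.degree s : ℝ) ≤ (Δ : ℝ) := by exact_mod_cast hdeg s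
  have hAB : A - B ≤ Real.log p - Real.log (1 - p) := by
    have hsub := neg_isingH_sub G β h s ξ
    nlinarith [hE.2]
  have hkey : (1 - p) * Real.exp A ≤ p * Real.exp B := by
    have hle : Real.log (1 - p) + A ≤ Real.log p + B := by linarith
    have := Real.exp_le_exp.mpr hle
    rwa [Real.exp_add, Real.exp_add, Real.exp_log hp.1,
      Real.exp_log (by linarith [hp.2] : (0:ℝ) < 1 - p)] at this
  show Real.exp A / _ ≤ p * (Real.exp A / _ + Real.exp B / _)
  rw [← add_div, ← mul_div_assoc]
  rw [div_le_div_iff_of_pos_right hZ]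
  linarith

/-! ### Putting it together -/

lemma sum_const_weight (ν : (V → Bool) → ℝ) (hν : ∑ σ : V → Bool, ν σ = 1)
    {g : (V → Bool) → ℝ} (hg : ∀ ξ η : V → Bool, g ξ = g η) :
    ∑ σ : V → Bool, ν σ * g σ = g (fun _ => false) := by
  calc ∑ σ : V → Bool, ν σ * g σ = ∑ σ : V → Bool, ν σ * g (fun _ => false) :=
        Finset.sum_congr rfl (fun σ _ => by rw [hg σ (fun _ => false)])
    _ = (∑ σ : V → Bool, ν σ) * g (fun _ => false) := by rw [Finset.sum_mul]
    _ = g (fun _ => false) := by rw [hν, one_mul]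

lemma dominates_of_plow (p : ℝ) (hp : p ∈ Set.Ioo (0:ℝ) 1) (ν : (V → Bool) → ℝ)
    (hν : ∑ σ : V → Bool, ν σ = 1)
    (hplow : ∀ (s : V) (ξ : V → Bool),
      p * (ν (Function.update ξ s true) + ν (Function.update ξ s false))
        ≤ ν (Function.update ξ s true)) :
    Dominates (prodWeight p) ν := by
  intro f hf
  set l := (Finset.univ : Finset V).toList with hl
  have hall : ∀ s : V, s ∈ l := fun s => Finset.mem_toList.mpr (Finset.mem_univ s)
  have hgconst : ∀ ξ η : V → Bool, TL p l f ξ = TL p l f η :=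
    const_of_insens (fun s => insens_TL p l f (hall s))
  have hπ : ∑ σ : V → Bool, prodWeight p σ * f σ = TL p l f (fun _ => false) := by
    rw [← sum_TL_eq p (prodWeight p) l f (fun s ξ => prodWeight_ratio p s ξ)]
    exact sum_const_weight (prodWeight p) (sum_prodWeight p) hgconst
  have hν2 : TL p l f (fun _ => false) ≤ ∑ σ : V → Bool, ν σ * f σ := by
    rw [← sum_const_weight ν hν hgconst]
    exact sum_TL_le p hp.1.le hp.2.le ν l hf hplow
  linarith

lemma dominates_of_phigh (p : ℝ) (hp : p ∈ Set.Ioo (0:ℝ) 1) (ν : (V → Bool) → ℝ)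
    (hν : ∑ σ : V → Bool, ν σ = 1)
    (hphigh : ∀ (s : V) (ξ : V → Bool),
      ν (Function.update ξ s true)
        ≤ p * (ν (Function.update ξ s true) + ν (Function.update ξ s false))) :
    Dominates ν (prodWeight p) := by
  intro f hf
  set l := (Finset.univ : Finset V).toList with hl
  have hall : ∀ s : V, s ∈ l := fun s => Finset.mem_toList.mpr (Finset.mem_univ s)
  have hgconst : ∀ ξ η : V → Bool, TL p l f ξ = TL p l f η :=
    const_of_insens (fun s => insens_TL p l f (hall s))
  have hπ : ∑ σ : V → Bool, prodWeight p σ * f σ = TL p l f (fun _ => false) := by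
    rw [← sum_TL_eq p (prodWeight p) l f (fun s ξ => prodWeight_ratio p s ξ)]
    exact sum_const_weight (prodWeight p) (sum_prodWeight p) hgconst
  have hν2 : ∑ σ : V → Bool, ν σ * f σ ≤ TL p l f (fun _ => false) := by
    rw [← sum_const_weight ν hν hgconst]
    exact sum_TL_ge p hp.1.le hp.2.le ν l hf hphigh
  linarith

end Aux

theorem ising_large_field_domination (Δ : ℕ) (β : ℝ) (hβ : 0 ≤ β) (p : ℝ)
    (hp : p ∈ Set.Ioo (0 : ℝ) 1) :
    (∃ hplus : ℝ, ∀ h : ℝ, hplus ≤ h → ∀ (V : Type) [DecidableEq V] [Fintype V]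
        (G : SimpleGraph V) [DecidableRel G.Adj], (∀ v : V, G.degree v ≤ Δ) →
          Dominates (prodWeight p) (isingWeight G β fun _ => h)) ∧
    (∃ hminus : ℝ, ∀ h : ℝ, h ≤ hminus → ∀ (V : Type) [DecidableEq V] [Fintype V]
        (G : SimpleGraph V) [DecidableRel G.Adj], (∀ v : V, G.degree v ≤ Δ) →
          Dominates (isingWeight G β fun _ => h) (prodWeight p)) := by
  constructor
  · refine ⟨β * Δ + (Real.log p - Real.log (1 - p)) / 2, ?_⟩
    intro h hh V _ _ G _ hdeg
    apply dominates_of_plow p hp _ (sum_isingWeight G β _)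
    intro s ξ
    exact ising_plow G hβ hp hdeg (by linarith) s ξ
  · refine ⟨-(β * Δ) + (Real.log p - Real.log (1 - p)) / 2, ?_⟩
    intro h hh V _ _ G _ hdeg
    apply dominates_of_phigh p hp _ (sum_isingWeight G β _)
    intro s ξ
    exact ising_phigh G hβ hp hdeg (by linarith) s ξ
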